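/- Let f : X → ℝ ∪ {+∞} be proper lsc and suppose f has the KL property at x̄ with exponent p = 1/2: there exist c > 0, ε > 0, η > 0 with dist(0, ∂f(x)) ≥ c·(f(x) − f(x̄))^{1/2} for x ∈ B(x̄, ε), f(x̄) < f(x) < f(x̄) + η. Let {x_k} be a sequence converging to x̄ with f(x_k) ↓ f(x̄), and suppose there exist α > 0, β > 0 such that for all large k: (i) f(x_k) − f(x_{k+1}) ≥ β‖x_{k+1} − x_k‖², and (ii) dist(0, ∂f(x_{k+1})) ≤ α‖x_{k+1} − x_k‖. Then the sequence {f(x_k) − f(x̄)} converges Q-linearly to 0, i.e., there exist ρ ∈ (0,1) and K such that f(x_{k+1}) − f(x̄) ≤ ρ·(f(x_k) − f(x̄)) for all k ≥ K. -/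

import Mathlib

open Filter Topology

/-- The (Fréchet) regular subdifferential of `f` at `x`. -/
def frechetSubdiff {X : Type*} [NormedAddCommGroup X] [InnerProductSpace ℝ X]
    (f : X → ℝ) (x : X) : Set X :=
  {v : X | ∀ ε > (0 : ℝ), ∃ δ > (0 : ℝ), ∀ y : X, ‖y - x‖ < δ →
      f x + (inner ℝ v (y - x) : ℝ) - ε * ‖y - x‖ ≤ f y}

/-- The limiting (Mordukhovich) subdifferential of `f` at `x`. -/
def limitingSubdiff {X : Type*} [NormedAddCommGroup X] [InnerProductSpace ℝ X]
    (f : X → ℝ) (x : X) : Set X :=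
  {v : X | ∃ u : ℕ → X, ∃ w : ℕ → X,
      (∀ n, w n ∈ frechetSubdiff f (u n)) ∧
      Tendsto u atTop (𝓝 x) ∧
      Tendsto (fun n => f (u n)) atTop (𝓝 (f x)) ∧
      Tendsto w atTop (𝓝 v)}

/-- Suppose the proper lsc function `f` has the KL property with exponent
`1/2` at `xbar` (constant `c > 0`, radius `ε`, gap `η`), and `x_k → xbar` with
`f (x_k)` decreasing to `f xbar`.  If for all large `k` one has the sufficient decrease
`f (x_k) − f (x_{k+1}) ≥ β ‖x_{k+1} − x_k‖²` and the relative error bound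
`dist(0, ∂f (x_{k+1})) ≤ α ‖x_{k+1} − x_k‖`, then `f (x_k) − f xbar → 0` Q-linearly:
there exist `ρ ∈ (0,1)` and `K` with
`f (x_{k+1}) − f xbar ≤ ρ (f (x_k) − f xbar)` for all `k ≥ K`. -/
theorem stmt17
    {X : Type*} [NormedAddCommGroup X] [InnerProductSpace ℝ X] [FiniteDimensional ℝ X]
    (f : X → ℝ) (hf : LowerSemicontinuous f)
    (xbar : X) (c ε η : ℝ) (hc : 0 < c) (hε : 0 < ε) (hη : 0 < η)
    (hKL : ∀ x ∈ Metric.ball xbar ε, f xbar < f x → f x < f xbar + η →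
      ∀ v ∈ limitingSubdiff f x, c * Real.sqrt (f x - f xbar) ≤ ‖v‖)
    (x : ℕ → X) (hxconv : Tendsto x atTop (𝓝 xbar))
    (hmono : ∀ k, f (x (k + 1)) ≤ f (x k))
    (hfconv : Tendsto (fun k => f (x k)) atTop (𝓝 (f xbar)))
    (α β : ℝ) (hα : 0 < α) (hβ : 0 < β)
    (N : ℕ)
    (hsd : ∀ k ≥ N, β * ‖x (k + 1) - x k‖ ^ 2 ≤ f (x k) - f (x (k + 1)))
    (hre : ∀ k ≥ N, ∃ v ∈ limitingSubdiff f (x (k + 1)),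
      ‖v‖ ≤ α * ‖x (k + 1) - x k‖) :
    ∃ ρ ∈ Set.Ioo (0 : ℝ) 1, ∃ K : ℕ, ∀ k ≥ K,
      f (x (k + 1)) - f xbar ≤ ρ * (f (x k) - f xbar) := by
  -- f (x k) ≥ f xbar for all k
  have hanti : ∀ k m, k ≤ m → f (x m) ≤ f (x k) := by
    intro k m hkm
    induction m with
    | zero => simp [Nat.le_zero.mp hkm]
    | succ n ih =>
      rcases Nat.lt_or_ge k (n + 1) with h | h
      · exact le_trans (hmono n) (ih (Nat.lt_succ_iff.mp h))
      · have : k = n + 1 := le_antisymm hkm h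
        simp [this]
  have hge : ∀ k, f xbar ≤ f (x k) := by
    intro k
    exact le_of_tendsto hfconv (Filter.eventually_atTop.mpr ⟨k, fun m hm => hanti k m hm⟩)
  -- eventually in the ball and below the gap
  have h1 : ∀ᶠ k in atTop, x k ∈ Metric.ball xbar ε :=
    hxconv (Metric.ball_mem_nhds xbar hε)
  have h2 : ∀ᶠ k in atTop, f (x k) < f xbar + η :=
    hfconv.eventually (gt_mem_nhds (by linarith))
  obtain ⟨K₁, hK₁⟩ := Filter.eventually_atTop.mp h1
  obtain ⟨K₂, hK₂⟩ := Filter.eventually_atTop.mp h2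
  refine ⟨α ^ 2 / (β * c ^ 2 + α ^ 2), ⟨by positivity, ?_⟩, max N (max K₁ K₂), ?_⟩
  · rw [div_lt_one (by positivity)]; nlinarith [mul_pos hβ (pow_pos hc 2)]
  intro k hk
  have hkN : k ≥ N := le_trans (le_max_left _ _) hk
  have hk1 : k + 1 ≥ K₁ := by
    have := le_trans (le_trans (le_max_left _ _) (le_max_right N _)) hk; omega
  have hk2 : k + 1 ≥ K₂ := by
    have := le_trans (le_trans (le_max_right _ _) (le_max_right N _)) hk; omega
  set a := f (x k) - f xbar with ha
  set b := f (x (k + 1)) - f xbar with hb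
  have hb0 : 0 ≤ b := by have := hge (k + 1); simp [hb]; linarith
  have hba : b ≤ a := by have := hmono k; simp [ha, hb]; linarith
  rcases eq_or_lt_of_le hb0 with hb0' | hbpos
  · rw [← hb0']; exact mul_nonneg (by positivity) (by linarith)
  · obtain ⟨v, hv, hvnorm⟩ := hre k hkN
    have hkl := hKL (x (k + 1)) (hK₁ _ hk1) (by simp [hb] at hbpos; linarith)
      (by have := hK₂ _ hk2; linarith) v hv
    -- c √b ≤ ‖v‖ ≤ α ‖Δ‖
    have hsq : c ^ 2 * b ≤ α ^ 2 * ‖x (k + 1) - x k‖ ^ 2 := by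
      have h3 : c * Real.sqrt b ≤ α * ‖x (k + 1) - x k‖ := le_trans hkl hvnorm
      have h4 : (c * Real.sqrt b) ^ 2 ≤ (α * ‖x (k + 1) - x k‖) ^ 2 := by
        apply sq_le_sq' _ h3
        have : 0 ≤ c * Real.sqrt b := by positivity
        linarith
      calc c ^ 2 * b = (c * Real.sqrt b) ^ 2 := by
            rw [mul_pow, Real.sq_sqrt hb0]
        _ ≤ (α * ‖x (k + 1) - x k‖) ^ 2 := h4
        _ = α ^ 2 * ‖x (k + 1) - x k‖ ^ 2 := by ring
    have hsd' := hsd k hkN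
    -- β c² b ≤ α² (a - b)
    have key : (β * c ^ 2 + α ^ 2) * b ≤ α ^ 2 * a := by nlinarith
    rw [div_mul_eq_mul_div, le_div_iff₀ (by positivity)]
    nlinarith
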